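/- For every θ ∈ [0, T₀] and every s ∈ [0, T], ⟨η(T, s, x₀(θ)) − η(0, s, x₀(θ)), N(θ)⟩ = ⟨ẋ₀(θ), y(θ)^⊤⟩ · ∫_{s−T+θ}^{s+θ} ⟨ d(τ, 0) D(τ) φ(τ−θ, x₀(τ)), f(θ) ⟩ dτ, where D(τ) is the 2×2 matrix whose first row is y(τ)^⊤ and whose second row is ẋ₀(τ)^⊥. (identity established in the proof of Theorem 3) -/

import Mathlib

open scoped RealInnerProductSpace

/-- For `a = (a₁, a₂) ∈ ℝ²`, `a^⊥ = (−a₂, a₁)`. -/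
noncomputable def perpVec (a : EuclideanSpace ℝ (Fin 2)) : EuclideanSpace ℝ (Fin 2) :=
  WithLp.toLp 2 ![-(a 1), a 0]

/-- For `a = (a₁, a₂) ∈ ℝ²`, `a^⊤ = (a₂, −a₁)`. -/
noncomputable def topVec (a : EuclideanSpace ℝ (Fin 2)) : EuclideanSpace ℝ (Fin 2) :=
  WithLp.toLp 2 ![a 1, -(a 0)]

/-- The 2×2 real matrix with rows `a` and `b`. -/
noncomputable def rowsMatrix (a b : EuclideanSpace ℝ (Fin 2)) :
    Matrix (Fin 2) (Fin 2) ℝ := !![a 0, a 1; b 0, b 1]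

/-- The 2×2 real matrix with columns `a` and `b`. -/
noncomputable def columnsMatrix (a b : EuclideanSpace ℝ (Fin 2)) :
    Matrix (Fin 2) (Fin 2) ℝ := !![a 0, b 0; a 1, b 1]

/-- A 2×2 real matrix acting on `ℝ²` (Euclidean). -/
noncomputable def mulVecE (M : Matrix (Fin 2) (Fin 2) ℝ)
    (v : EuclideanSpace ℝ (Fin 2)) : EuclideanSpace ℝ (Fin 2) := WithLp.toLp 2 (M.mulVec v)

/- ### Auxiliary development -/

section Aux

open Set

local notation "E2" => EuclideanSpace ℝ (Fin 2)

/-- The planar cross product (determinant of the two columns). -/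
noncomputable def crossP (a b : EuclideanSpace ℝ (Fin 2)) : ℝ := a 0 * b 1 - a 1 * b 0

namespace CrossAux

lemma proj_hasDerivAt {u : ℝ → E2} {u' : E2} {t : ℝ} (i : Fin 2) (h : HasDerivAt u u' t) :
    HasDerivAt (fun t => u t i) (u' i) t :=
  ((EuclideanSpace.proj i).hasFDerivAt.comp_hasDerivAt t h :)

lemma crossP_hasDerivAt {u v : ℝ → E2} {u' v' : E2} {t : ℝ}
    (hu : HasDerivAt u u' t) (hv : HasDerivAt v v' t) :
    HasDerivAt (fun t => crossP (u t) (v t)) (crossP u' (v t) + crossP (u t) v') t := by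
  have := ((proj_hasDerivAt 0 hu).mul (proj_hasDerivAt 1 hv)).sub
    ((proj_hasDerivAt 1 hu).mul (proj_hasDerivAt 0 hv))
  refine this.congr_deriv ?_
  simp [crossP]; ring

lemma crossP_continuous {u v : ℝ → E2} (hu : Continuous u) (hv : Continuous v) :
    Continuous fun t => crossP (u t) (v t) := by
  have h0u := (EuclideanSpace.proj (0 : Fin 2)).continuous.comp hu
  have h1u := (EuclideanSpace.proj (1 : Fin 2)).continuous.comp hu
  have h0v := (EuclideanSpace.proj (0 : Fin 2)).continuous.comp hv
  have h1v := (EuclideanSpace.proj (1 : Fin 2)).continuous.comp hv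
  exact (h0u.mul h1v).sub (h1u.mul h0v)

lemma vec_decomp (v : E2) :
    v = v 0 • EuclideanSpace.single (0 : Fin 2) (1 : ℝ) + v 1 • EuclideanSpace.single 1 1 := by
  ext i; fin_cases i <;> simp [EuclideanSpace.single_apply]

lemma apply_eq (A : E2 →L[ℝ] E2) (v : E2) (i : Fin 2) :
    A v i = v 0 * A (EuclideanSpace.single 0 1) i + v 1 * A (EuclideanSpace.single 1 1) i := by
  conv_lhs => rw [vec_decomp v]
  simp [smul_eq_mul]

lemma crossP_skew (a b : E2) : crossP a b = -crossP b a := by simp only [crossP]; ring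

lemma crossP_zero_right (a : E2) : crossP a (0 : E2) = 0 := by
  simp [crossP]

lemma crossP_zero_left (a : E2) : crossP (0 : E2) a = 0 := by
  simp [crossP]

lemma crossP_sub_right (a b c : E2) : crossP c (a - b) = crossP c a - crossP c b := by
  simp only [crossP, PiLp.sub_apply]; ring

lemma crossP_sub_left (a b c : E2) : crossP (a - b) c = crossP a c - crossP b c := by
  simp only [crossP, PiLp.sub_apply]; ring

lemma crossP_smul_add (r s : ℝ) (a b c : E2) :
    crossP c (r • a + s • b) = r * crossP c a + s * crossP c b := by
  simp only [crossP, PiLp.add_apply, PiLp.smul_apply, smul_eq_mul]; ring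

lemma crossP_smul_add' (r s : ℝ) (a b c : E2) :
    crossP (r • a + s • b) c = r * crossP a c + s * crossP b c := by
  simp only [crossP, PiLp.add_apply, PiLp.smul_apply, smul_eq_mul]; ring

/-- Key derivative lemma: if `u`, `v`, `w` solve the homogeneous linear system `x' = A t x`
and `z` solves the inhomogeneous one `z' = A t z + h t`, then
`(crossP w z / crossP u v)' = crossP w h / crossP u v` (the Wronskian factors cancel). -/
lemma key_deriv {A : ℝ → E2 →L[ℝ] E2} {u v w z h : ℝ → E2} {t : ℝ}
    (hu : HasDerivAt u (A t (u t)) t) (hv : HasDerivAt v (A t (v t)) t)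
    (hw : HasDerivAt w (A t (w t)) t)
    (hz : HasDerivAt z (A t (z t) + h t) t)
    (hΔ : crossP (u t) (v t) ≠ 0) :
    HasDerivAt (fun τ => crossP (w τ) (z τ) / crossP (u τ) (v τ))
      (crossP (w t) (h t) / crossP (u t) (v t)) t := by
  set tr : ℝ := A t (EuclideanSpace.single 0 1) 0 + A t (EuclideanSpace.single 1 1) 1 with htr
  have h1 : HasDerivAt (fun τ => crossP (w τ) (z τ))
      (tr * crossP (w t) (z t) + crossP (w t) (h t)) t := by
    have := crossP_hasDerivAt hw hz
    convert this using 1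
    simp only [crossP, htr, PiLp.add_apply]
    rw [apply_eq (A t) (w t) 0, apply_eq (A t) (w t) 1, apply_eq (A t) (z t) 0,
      apply_eq (A t) (z t) 1]
    ring
  have h2 : HasDerivAt (fun τ => crossP (u τ) (v τ)) (tr * crossP (u t) (v t)) t := by
    have := crossP_hasDerivAt hu hv
    convert this using 1
    simp only [crossP, htr]
    rw [apply_eq (A t) (u t) 0, apply_eq (A t) (u t) 1, apply_eq (A t) (v t) 0,
      apply_eq (A t) (v t) 1]
    ring
  have := h1.div h2 hΔ
  refine this.congr_deriv ?_
  field_simp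
  ring

lemma cramer2 {a b : E2} (hΔ : crossP a b ≠ 0) (v : E2) :
    v = (crossP v b / crossP a b) • a + (crossP a v / crossP a b) • b := by
  simp only [crossP] at hΔ ⊢
  ext i
  simp only [PiLp.add_apply, PiLp.smul_apply, smul_eq_mul]
  fin_cases i
  · show v 0 = (v 0 * b 1 - v 1 * b 0) / (a 0 * b 1 - a 1 * b 0) * a 0 +
      (a 0 * v 1 - a 1 * v 0) / (a 0 * b 1 - a 1 * b 0) * b 0
    rw [div_mul_eq_mul_div, div_mul_eq_mul_div, ← add_div, eq_div_iff hΔ]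
    ring
  · show v 1 = (v 0 * b 1 - v 1 * b 0) / (a 0 * b 1 - a 1 * b 0) * a 1 +
      (a 0 * v 1 - a 1 * v 0) / (a 0 * b 1 - a 1 * b 0) * b 1
    rw [div_mul_eq_mul_div, div_mul_eq_mul_div, ← add_div, eq_div_iff hΔ]
    ring

lemma crossP_ne_zero_of_indep {a b : E2} (h : LinearIndependent ℝ ![a, b]) :
    crossP a b ≠ 0 := by
  intro hc
  simp only [crossP] at hc
  rw [LinearIndependent.pair_iff] at h
  have h1 := h (b 1) (-(a 1)) (by
    ext i
    simp only [PiLp.add_apply, PiLp.smul_apply, smul_eq_mul, PiLp.zero_apply]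
    fin_cases i
    · show b 1 * a 0 + -(a 1) * b 0 = 0
      linear_combination hc
    · show b 1 * a 1 + -(a 1) * b 1 = 0
      ring)
  have h2 := h (-(b 0)) (a 0) (by
    ext i
    simp only [PiLp.add_apply, PiLp.smul_apply, smul_eq_mul, PiLp.zero_apply]
    fin_cases i
    · show -(b 0) * a 0 + a 0 * b 0 = 0
      ring
    · show -(b 0) * a 1 + a 0 * b 1 = 0
      linear_combination hc)
  have h3 := h 1 0 (by
    ext i
    simp only [PiLp.add_apply, PiLp.smul_apply, smul_eq_mul, PiLp.zero_apply]
    fin_cases i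
    · show 1 * a 0 + 0 * b 0 = 0
      have := h2.2; linarith
    · show 1 * a 1 + 0 * b 1 = 0
      have := h1.2; linarith)
  exact one_ne_zero h3.1

/-- Global uniqueness of solutions for an autonomous `C²` planar vector field. -/
lemma ODE_unique_global {ψ : E2 → E2} (hψ : ContDiff ℝ 2 ψ) {f g : ℝ → E2}
    (hf : ∀ t, HasDerivAt f (ψ (f t)) t) (hg : ∀ t, HasDerivAt g (ψ (g t)) t)
    (h0 : f 0 = g 0) : ∀ t, f t = g t := by
  have hfc : Continuous f := by
    rw [continuous_iff_continuousAt]; exact fun t => (hf t).continuousAt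
  have hgc : Continuous g := by
    rw [continuous_iff_continuousAt]; exact fun t => (hg t).continuousAt
  have hopen : IsOpen {t : ℝ | f t = g t} := by
    rw [isOpen_iff_mem_nhds]
    intro t₀ ht₀
    obtain ⟨K, U, hU, hlip⟩ :=
      (hψ.contDiffAt.of_le (by norm_num)).exists_lipschitzOnWith (x := f t₀)
    have hfU : ∀ᶠ t in nhds t₀, HasDerivAt f (ψ (f t)) t ∧ f t ∈ U := by
      filter_upwards [hfc.continuousAt.preimage_mem_nhds hU] with t ht using ⟨hf t, ht⟩
    have hgU : ∀ᶠ t in nhds t₀, HasDerivAt g (ψ (g t)) t ∧ g t ∈ U := by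
      filter_upwards [hgc.continuousAt.preimage_mem_nhds (by rwa [ht₀] at hU)] with t ht
        using ⟨hg t, ht⟩
    exact ODE_solution_unique_of_eventually (v := fun _ x => ψ x) (s := fun _ => U)
      (.of_forall fun _ => hlip) hfU hgU ht₀
  have hclosed : IsClosed {t : ℝ | f t = g t} := isClosed_eq hfc hgc
  have huniv : {t : ℝ | f t = g t} = univ := IsClopen.eq_univ ⟨hclosed, hopen⟩ ⟨0, h0⟩
  intro t
  have ht : t ∈ {t : ℝ | f t = g t} := huniv ▸ mem_univ t
  exact ht

lemma const_of_hasDerivAt_zero {f : ℝ → ℝ} (h : ∀ t, HasDerivAt f 0 t) (a b : ℝ) :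
    f a = f b :=
  is_const_of_deriv_eq_zero (fun t => (h t).differentiableAt) (fun t => (h t).deriv) a b

lemma shift_hasDerivAt {f : ℝ → E2} {f' : E2} {c t : ℝ} (h : HasDerivAt f f' (t + c)) :
    HasDerivAt (fun τ => f (τ + c)) f' t := by
  exact HasDerivAt.comp_add_const t c h

lemma inner_N_eq (a b v fv : E2) :
    ⟪v, (WithLp.toLp 2 ((columnsMatrix (topVec b) (perpVec a)).mulVec fv) : E2)⟫ =
      crossP v b * fv 0 + crossP a v * fv 1 := by
  simp [columnsMatrix, topVec, perpVec, crossP, Matrix.mulVec, PiLp.inner_apply,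
    RCLike.inner_apply, Fin.sum_univ_two, dotProduct, Matrix.cons_val_zero,
    Matrix.cons_val_one, Matrix.vecHead, Matrix.vecTail]
  ring

lemma inner_smul_rows_eq (a b w fv : E2) (c : ℝ) :
    ⟪c • mulVecE (rowsMatrix (topVec b) (perpVec a)) w, fv⟫ =
      c * (crossP w b * fv 0 + crossP a w * fv 1) := by
  simp [mulVecE, rowsMatrix, topVec, perpVec, crossP, Matrix.mulVec, PiLp.inner_apply,
    RCLike.inner_apply, Fin.sum_univ_two, dotProduct, Matrix.cons_val_zero,
    Matrix.cons_val_one, Matrix.vecHead, Matrix.vecTail, PiLp.smul_apply, smul_eq_mul]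
  ring

lemma det_rows_eq (a b : E2) : (rowsMatrix (topVec b) (perpVec a)).det = crossP a b := by
  simp [rowsMatrix, topVec, perpVec, crossP, Matrix.det_fin_two_of]
  ring

lemma inner_topVec_eq (a b : E2) : ⟪a, topVec b⟫ = crossP a b := by
  simp [topVec, crossP, PiLp.inner_apply, RCLike.inner_apply, Fin.sum_univ_two]
  ring

end CrossAux

end Aux

open CrossAux in
/-- **Identity established in the proof of Theorem 3.**  With `x₀` a periodic
solution of `ẋ = ψ(x)` of least period `T₀`, `y` a solution of the linearized
system independent of `ẋ₀`, `T = k l T₀`, `N(θ) = (y(θ)^⊤ ẋ₀(θ)^⊥) f(θ)`,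
`D(t)` the matrix with rows `y(t)^⊤` and `ẋ₀(t)^⊥`, and
`d(t,θ) = (det D(t+θ))⁻¹`:  for every `θ ∈ [0,T₀]` and `s ∈ [0,T]`,
`⟨η(T,s,x₀(θ)) − η(0,s,x₀(θ)), N(θ)⟩
  = ⟨ẋ₀(θ), y(θ)^⊤⟩ ∫_{s−T+θ}^{s+θ} ⟨d(τ,0) D(τ) φ(τ−θ, x₀(τ)), f(θ)⟩ dτ`. -/
theorem eta_difference_inner_N_factored_formula
    (ψ : EuclideanSpace ℝ (Fin 2) → EuclideanSpace ℝ (Fin 2))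
    (hψ : ContDiff ℝ 2 ψ)
    (T₁ : ℝ) (hT₁ : 0 < T₁)
    (φ : ℝ → EuclideanSpace ℝ (Fin 2) → EuclideanSpace ℝ (Fin 2))
    (hφcont : Continuous fun p : ℝ × EuclideanSpace ℝ (Fin 2) => φ p.1 p.2)
    (hφper : ∀ t ξ, φ (t + T₁) ξ = φ t ξ)
    (T₀ : ℝ) (hT₀ : 0 < T₀)
    (x₀ : ℝ → EuclideanSpace ℝ (Fin 2))
    (hx₀sol : ∀ t : ℝ, HasDerivAt x₀ (ψ (x₀ t)) t)
    (hx₀per : Function.Periodic x₀ T₀)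
    (hx₀least : ∀ p : ℝ, 0 < p → Function.Periodic x₀ p → T₀ ≤ p)
    (l k : ℕ) (hl : Nat.Prime l) (hk : Nat.Prime k)
    (hratio : T₀ / T₁ = (l : ℝ) / (k : ℝ))
    (T : ℝ) (hT : T = (k : ℝ) * l * T₀)
    (Ω : ℝ → ℝ → EuclideanSpace ℝ (Fin 2) → EuclideanSpace ℝ (Fin 2))
    (hΩinit : ∀ t₀ ξ, Ω t₀ t₀ ξ = ξ)
    (hΩsol : ∀ t₀ ξ t, HasDerivAt (fun s => Ω s t₀ ξ) (ψ (Ω t t₀ ξ)) t)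
    (η : ℝ → ℝ → EuclideanSpace ℝ (Fin 2) → EuclideanSpace ℝ (Fin 2))
    (hηinit : ∀ s ξ, η s s ξ = 0)
    (hηsol : ∀ s ξ t, HasDerivAt (fun u => η u s ξ)
      (fderiv ℝ ψ (Ω t 0 ξ) (η t s ξ) + φ t (Ω t 0 ξ)) t)
    (y : ℝ → EuclideanSpace ℝ (Fin 2))
    (hysol : ∀ t : ℝ, HasDerivAt y (fderiv ℝ ψ (x₀ t) (y t)) t)
    (hyindep : ∀ t : ℝ, LinearIndependent ℝ ![ψ (x₀ t), y t])
    (f : ℝ → EuclideanSpace ℝ (Fin 2))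
    (N : ℝ → EuclideanSpace ℝ (Fin 2))
    (hN : ∀ θ : ℝ, N θ =
      (WithLp.toLp 2 ((columnsMatrix (topVec (y θ)) (perpVec (ψ (x₀ θ)))).mulVec (f θ)) :
        EuclideanSpace ℝ (Fin 2)))
    (D : ℝ → Matrix (Fin 2) (Fin 2) ℝ)
    (hD : ∀ t : ℝ, D t = rowsMatrix (topVec (y t)) (perpVec (ψ (x₀ t))))
    (d : ℝ → ℝ → ℝ)
    (hd : ∀ t θ : ℝ, d t θ = ((D (t + θ)).det)⁻¹) :
    ∀ θ ∈ Set.Icc 0 T₀, ∀ s ∈ Set.Icc 0 T,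
      ⟪η T s (x₀ θ) - η 0 s (x₀ θ), N θ⟫ =
        ⟪ψ (x₀ θ), topVec (y θ)⟫ *
          ∫ τ in (s - T + θ)..(s + θ),
            ⟪d τ 0 • mulVecE (D τ) (φ (τ - θ) (x₀ τ)), f θ⟫ := by
  intro θ _ s _
  classical
  -- basic facts
  have hψd : Differentiable ℝ ψ := hψ.differentiable (by norm_num)
  have hk0 : (k : ℝ) ≠ 0 := Nat.cast_ne_zero.mpr hk.pos.ne'
  have hratio' : T₀ * k = (l : ℝ) * T₁ := (div_eq_div_iff hT₁.ne' hk0).mp hratio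
  have hTl : T = ((l * l : ℕ) : ℝ) * T₁ := by
    push_cast
    rw [hT]
    linear_combination (l : ℝ) * hratio'
  have hTx : Function.Periodic x₀ T := by
    have h1 : T = ((k * l : ℕ) : ℝ) * T₀ := by rw [hT]; push_cast; ring
    rw [h1]; exact hx₀per.nat_mul (k * l)
  have hφT : ∀ (t : ℝ) ξ', φ (t - T) ξ' = φ t ξ' := by
    intro t ξ'
    have hp : Function.Periodic (fun t => φ t ξ') T₁ := fun t => hφper t ξ'
    have h2 := (hp.nat_mul (l * l)).sub_eq (x := t)
    rw [hTl]
    exact h2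
  have hΩeq : ∀ t, Ω t 0 (x₀ θ) = x₀ (t + θ) :=
    ODE_unique_global hψ (f := fun t => Ω t 0 (x₀ θ)) (g := fun t => x₀ (t + θ))
      (fun t => hΩsol 0 (x₀ θ) t) (fun t => shift_hasDerivAt (hx₀sol (t + θ)))
      (by show Ω 0 0 (x₀ θ) = x₀ (0 + θ); rw [hΩinit, zero_add])
  -- shifted solutions of the variational equations
  set z : ℝ → EuclideanSpace ℝ (Fin 2) := fun t => η t s (x₀ θ) with hzdef
  set X : ℝ → EuclideanSpace ℝ (Fin 2) := fun t => ψ (x₀ (t + θ)) with hXdef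
  set Y : ℝ → EuclideanSpace ℝ (Fin 2) := fun t => y (t + θ) with hYdef
  set Yp : ℝ → EuclideanSpace ℝ (Fin 2) := fun t => y (t + (θ - T)) with hYpdef
  set Φh : ℝ → EuclideanSpace ℝ (Fin 2) := fun t => φ t (x₀ (t + θ)) with hΦdef
  set A : ℝ → EuclideanSpace ℝ (Fin 2) →L[ℝ] EuclideanSpace ℝ (Fin 2) :=
    fun t => fderiv ℝ ψ (x₀ (t + θ)) with hAdef
  have hX : ∀ t, HasDerivAt X (A t (X t)) t := by
    intro t
    have h1 := (hψd (x₀ (t + θ))).hasFDerivAt.comp_hasDerivAt t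
      (shift_hasDerivAt (hx₀sol (t + θ)))
    simp only [hXdef, hAdef]
    exact h1
  have hY : ∀ t, HasDerivAt Y (A t (Y t)) t := by
    intro t
    have h1 := shift_hasDerivAt (f := y) (c := θ) (hysol (t + θ))
    simp only [hYdef, hAdef]
    exact h1
  have hYp : ∀ t, HasDerivAt Yp (A t (Yp t)) t := by
    intro t
    have h1 := shift_hasDerivAt (f := y) (c := θ - T) (hysol (t + (θ - T)))
    have harg : x₀ (t + (θ - T)) = x₀ (t + θ) := by
      rw [show t + (θ - T) = (t + θ) - T from by ring, hTx.sub_eq]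
    rw [harg] at h1
    simp only [hYpdef, hAdef]
    exact h1
  have hz : ∀ t, HasDerivAt z (A t (z t) + Φh t) t := by
    intro t
    have h1 := hηsol s (x₀ θ) t
    rw [hΩeq t] at h1
    simp only [hzdef, hAdef, hΦdef]
    exact h1
  have hΔne : ∀ t, crossP (X t) (Y t) ≠ 0 := by
    intro t
    have h1 := crossP_ne_zero_of_indep (hyindep (t + θ))
    simp only [hXdef, hYdef]
    exact h1
  -- continuity
  have hx₀c : Continuous x₀ := by
    rw [continuous_iff_continuousAt]; exact fun t => (hx₀sol t).continuousAt
  have hyc : Continuous y := by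
    rw [continuous_iff_continuousAt]; exact fun t => (hysol t).continuousAt
  have hshiftc : Continuous fun t : ℝ => t + θ := continuous_id.add continuous_const
  have hXc : Continuous X := by
    simp only [hXdef]; exact hψd.continuous.comp (hx₀c.comp hshiftc)
  have hYc : Continuous Y := by simp only [hYdef]; exact hyc.comp hshiftc
  have hΦc : Continuous Φh := by
    simp only [hΦdef]
    exact hφcont.comp (continuous_id.prodMk (hx₀c.comp hshiftc))
  -- monodromy constants
  have hYp0 : ∀ t, HasDerivAt Yp
      (A t (Yp t) + (fun _ : ℝ => (0 : EuclideanSpace ℝ (Fin 2))) t) t := by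
    intro t; simpa using hYp t
  have hY0' : ∀ t, HasDerivAt Y
      (A t (Y t) + (fun _ : ℝ => (0 : EuclideanSpace ℝ (Fin 2))) t) t := by
    intro t; simpa using hY t
  have hαd : ∀ t, HasDerivAt (fun τ => crossP (X τ) (Yp τ) / crossP (X τ) (Y τ)) 0 t := by
    intro t
    have h1 := key_deriv (z := Yp) (h := fun _ => (0 : EuclideanSpace ℝ (Fin 2))) (hX t) (hY t) (hX t) (hYp0 t) (hΔne t)
    convert h1 using 1
    simp [crossP_zero_right]
  have hβd : ∀ t, HasDerivAt (fun τ => crossP (Yp τ) (Y τ) / crossP (X τ) (Y τ)) 0 t := by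
    intro t
    have h1 := key_deriv (z := Y) (h := fun _ => (0 : EuclideanSpace ℝ (Fin 2))) (hX t) (hY t) (hYp t) (hY0' t) (hΔne t)
    convert h1 using 1
    simp [crossP_zero_right]
  obtain ⟨α, hαt⟩ : ∃ a : ℝ, ∀ t, crossP (X t) (Yp t) / crossP (X t) (Y t) = a :=
    ⟨_, fun t => const_of_hasDerivAt_zero hαd t 0⟩
  obtain ⟨β, hβt⟩ : ∃ b : ℝ, ∀ t, crossP (Yp t) (Y t) / crossP (X t) (Y t) = b :=
    ⟨_, fun t => const_of_hasDerivAt_zero hβd t 0⟩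
  have hYpt : ∀ t, Yp t = β • X t + α • Y t := by
    intro t
    have h1 := cramer2 (hΔne t) (Yp t)
    rw [hαt t, hβt t] at h1
    exact h1
  have hΔshift : ∀ t, crossP (X (t - T)) (Y (t - T)) = α * crossP (X t) (Y t) := by
    intro t
    have h1 : X (t - T) = X t := by
      simp only [hXdef]
      rw [show t - T + θ = (t + θ) - T from by ring, hTx.sub_eq]
    have h2 : Y (t - T) = Yp t := by
      simp only [hYdef, hYpdef]
      rw [show t - T + θ = t + (θ - T) from by ring]
    rw [h1, h2, ← hαt t, div_mul_cancel₀ _ (hΔne t)]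
  have hα0 : α ≠ 0 := by
    intro hc
    have h1 := hΔshift 0
    rw [hc, zero_mul] at h1
    exact hΔne (0 - T) h1
  -- the integrand, its antiderivative, and FTC
  set c : ℝ := α⁻¹ * (-β * f θ 0 + f θ 1) - f θ 1 with hcdef
  set gI : ℝ → ℝ := fun τ =>
    crossP (Φh τ) (Y τ) / crossP (X τ) (Y τ) * f θ 0 +
      crossP (X τ) (Φh τ) / crossP (X τ) (Y τ) * f θ 1 with hgIdef
  set h₂ : ℝ → ℝ := fun τ => crossP (X τ) (Φh τ) / crossP (X τ) (Y τ) with hh₂def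
  set P : ℝ → ℝ := fun t =>
    crossP (z t) (Y t) / crossP (X t) (Y t) * f θ 0 +
      crossP (X t) (z t) / crossP (X t) (Y t) * f θ 1 with hPdef
  set Q : ℝ → ℝ := fun t => crossP (X t) (z t) / crossP (X t) (Y t) with hQdef
  have hQd : ∀ t, HasDerivAt Q (h₂ t) t := by
    intro t
    have h1 := key_deriv (hX t) (hY t) (hX t) (hz t) (hΔne t)
    simp only [hQdef, hh₂def]
    exact h1
  have hPd : ∀ t, HasDerivAt P (gI t) t := by
    intro t
    have h1 := (key_deriv (hX t) (hY t) (hY t) (hz t) (hΔne t)).neg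
    have heq : (fun τ => -(crossP (Y τ) (z τ) / crossP (X τ) (Y τ))) =
        fun τ => crossP (z τ) (Y τ) / crossP (X τ) (Y τ) := by
      funext τ
      rw [crossP_skew (z τ) (Y τ)]
      ring
    rw [show (-fun τ => crossP (Y τ) (z τ) / crossP (X τ) (Y τ)) =
        fun τ => -(crossP (Y τ) (z τ) / crossP (X τ) (Y τ)) from rfl, heq] at h1
    have h3 : -(crossP (Y t) (Φh t) / crossP (X t) (Y t)) =
        crossP (Φh t) (Y t) / crossP (X t) (Y t) := by
      rw [crossP_skew (Φh t) (Y t)]; ring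
    rw [h3] at h1
    have h4 := (h1.mul_const (f θ 0)).add ((hQd t).mul_const (f θ 1))
    simp only [hPdef, hgIdef, hQdef, hh₂def] at h4 ⊢
    exact h4
  have hgIc : Continuous gI := by
    simp only [hgIdef]
    exact (((crossP_continuous hΦc hYc).div (crossP_continuous hXc hYc) hΔne).mul
      continuous_const).add
      (((crossP_continuous hXc hΦc).div (crossP_continuous hXc hYc) hΔne).mul continuous_const)
  have hh₂c : Continuous h₂ := by
    simp only [hh₂def]
    exact (crossP_continuous hXc hΦc).div (crossP_continuous hXc hYc) hΔne
  have hFTCg : ∀ a b : ℝ, (∫ τ in a..b, gI τ) = P b - P a := fun a b =>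
    intervalIntegral.integral_eq_sub_of_hasDerivAt (fun τ _ => hPd τ)
      (hgIc.intervalIntegrable a b)
  have hFTCh : ∀ a b : ℝ, (∫ τ in a..b, h₂ τ) = Q b - Q a := fun a b =>
    intervalIntegral.integral_eq_sub_of_hasDerivAt (fun τ _ => hQd τ)
      (hh₂c.intervalIntegrable a b)
  have hzs : z s = 0 := by simp only [hzdef]; exact hηinit s (x₀ θ)
  have hPs : P s = 0 := by
    simp only [hPdef, hzs, crossP_zero_left, crossP_zero_right, zero_div, zero_mul, add_zero]
  have hQs : Q s = 0 := by
    simp only [hQdef, hzs, crossP_zero_right, zero_div]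
  -- the periodicity shift of the integrand
  have hgshift : ∀ τ, gI (τ - T) = gI τ + c * h₂ τ := by
    intro τ
    have h1 : X (τ - T) = X τ := by
      simp only [hXdef]; rw [show τ - T + θ = (τ + θ) - T from by ring, hTx.sub_eq]
    have h2 : Y (τ - T) = Yp τ := by
      simp only [hYdef, hYpdef]; rw [show τ - T + θ = τ + (θ - T) from by ring]
    have h3 : Φh (τ - T) = Φh τ := by
      simp only [hΦdef]
      rw [show τ - T + θ = (τ + θ) - T from by ring, hTx.sub_eq, hφT]
    simp only [hgIdef, hh₂def, hcdef]
    rw [h1, h2, h3, hYpt τ]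
    simp only [crossP_smul_add]
    rw [crossP_skew (Φh τ) (X τ)]
    have hxx : crossP (X τ) (X τ) = 0 := by simp only [crossP]; ring
    rw [hxx]
    have hDτ := hΔne τ
    field_simp
    ring
  -- rewriting the integrand of the statement
  have hInt : ∀ τ : ℝ, (⟪d τ 0 • mulVecE (D τ) (φ (τ - θ) (x₀ τ)), f θ⟫ : ℝ) =
      (crossP (ψ (x₀ τ)) (y τ))⁻¹ *
        (crossP (φ (τ - θ) (x₀ τ)) (y τ) * f θ 0 +
          crossP (ψ (x₀ τ)) (φ (τ - θ) (x₀ τ)) * f θ 1) := by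
    intro τ
    rw [hd τ 0, add_zero, hD τ, inner_smul_rows_eq, det_rows_eq]
  have hgIθ : ∀ σ : ℝ, (crossP (ψ (x₀ (σ + θ))) (y (σ + θ)))⁻¹ *
      (crossP (φ (σ + θ - θ) (x₀ (σ + θ))) (y (σ + θ)) * f θ 0 +
        crossP (ψ (x₀ (σ + θ))) (φ (σ + θ - θ) (x₀ (σ + θ))) * f θ 1) = gI σ := by
    intro σ
    simp only [hgIdef, hXdef, hYdef, hΦdef, add_sub_cancel_right]
    ring
  have hIch : (∫ τ in (s - T + θ)..(s + θ),
      (⟪d τ 0 • mulVecE (D τ) (φ (τ - θ) (x₀ τ)), f θ⟫ : ℝ)) = ∫ σ in (s - T)..s, gI σ := by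
    have hcv := intervalIntegral.integral_comp_add_right (a := s - T) (b := s)
      (f := fun τ => (⟪d τ 0 • mulVecE (D τ) (φ (τ - θ) (x₀ τ)), f θ⟫ : ℝ)) θ
    rw [← hcv]
    apply intervalIntegral.integral_congr
    intro σ _
    show (⟪d (σ + θ) 0 • mulVecE (D (σ + θ)) (φ (σ + θ - θ) (x₀ (σ + θ))), f θ⟫ : ℝ) = gI σ
    rw [hInt (σ + θ)]
    exact hgIθ σ
  have hIsplit : (∫ σ in (s - T)..s, gI σ) = P T + c * Q T - P 0 := by
    have hadj : ((∫ σ in (s - T)..(0 : ℝ), gI σ) + ∫ σ in (0 : ℝ)..s, gI σ)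
        = ∫ σ in (s - T)..s, gI σ :=
      intervalIntegral.integral_add_adjacent_intervals (hgIc.intervalIntegrable _ _)
        (hgIc.intervalIntegrable _ _)
    have hleft : (∫ σ in (s - T)..(0 : ℝ), gI σ) = ∫ τ in s..T, gI (τ - T) := by
      have h5 := intervalIntegral.integral_comp_sub_right (a := s) (b := T) (f := gI) T
      rw [sub_self] at h5
      exact h5.symm
    have hper : (∫ τ in s..T, gI (τ - T)) = (∫ τ in s..T, gI τ) + c * ∫ τ in s..T, h₂ τ := by
      rw [← intervalIntegral.integral_const_mul,
        ← intervalIntegral.integral_add (hgIc.intervalIntegrable _ _)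
          ((hh₂c.intervalIntegrable _ _).const_mul c)]
      apply intervalIntegral.integral_congr
      intro τ _
      exact hgshift τ
    rw [← hadj, hleft, hper, hFTCg 0 s, hFTCg s T, hFTCh s T, hPs, hQs]
    ring
  -- final assembly
  have hzT : η T s (x₀ θ) = z T := by simp only [hzdef]
  have hz0 : η 0 s (x₀ θ) = z 0 := by simp only [hzdef]
  have hX0 : ψ (x₀ θ) = X 0 := by simp only [hXdef, zero_add]
  have hY0 : y θ = Y 0 := by simp only [hYdef, zero_add]
  have hXT : X 0 = X T := by
    simp only [hXdef, zero_add]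
    rw [show T + θ = θ + T from by ring, hTx θ]
  have hYθ : Y 0 = Yp T := by
    simp only [hYdef, hYpdef, zero_add]
    rw [show T + (θ - T) = θ from by ring]
  have hD0T : crossP (X 0) (Y 0) = α * crossP (X T) (Y T) := by
    have h6 := hΔshift T
    rw [sub_self] at h6
    exact h6
  have e1 : crossP (z T) (Y 0) = -(β * crossP (X T) (z T)) + α * crossP (z T) (Y T) := by
    rw [hYθ, hYpt T, crossP_smul_add, crossP_skew (z T) (X T)]
    ring
  have e2 : crossP (X 0) (z T) = crossP (X T) (z T) := by rw [hXT]
  rw [hN θ, inner_N_eq (ψ (x₀ θ)) (y θ) (η T s (x₀ θ) - η 0 s (x₀ θ)) (f θ), inner_topVec_eq,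
    hIch, hIsplit, hzT, hz0, hX0, hY0, crossP_sub_left, crossP_sub_right, e1, e2]
  simp only [hPdef, hQdef, hcdef]
  rw [hD0T]
  field_simp [hΔne T, hα0]
  ring
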